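/- Let n ∈ ℕ₊, let H̃ ∈ ℝ^{n×n} be symmetric positive semidefinite, λ ≥ 0, Ω = [I, −I] ∈ ℝ^{n×2n}, τ > 0, and let x, s, x̃, s̃ ∈ ℝ^{2n} have all components positive. Suppose Δz ∈ ℝ^n and Δx, Δs ∈ ℝ^{2n} satisfy the approximated Newton system: 2λH̃Δz + ΩΔx = 0, ΩᵀΔz + Δs = 0, and s̃ ⊙ Δx + x̃ ⊙ Δs = τe − x ⊙ s. Define r = (x̃ ⊙ s̃)^{−1/2} ⊙ (τe − x ⊙ s), p_r = (s̃/x̃)^{1/2} ⊙ Δx, and q_r = (x̃/s̃)^{1/2} ⊙ Δs. Then ‖p_r‖ ≤ ‖r‖, ‖q_r‖ ≤ ‖r‖, ‖Δx ⊙ Δs‖ ≤ ‖r‖²/2, and ‖p_r‖ + ‖q_r‖ ≤ √2·‖r‖. -/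

import Mathlib

open Matrix

/-- Euclidean norm of a finitely-indexed real vector. -/
noncomputable def enorm2 {ι : Type*} [Fintype ι] (v : ι → ℝ) : ℝ :=
  Real.sqrt (∑ i, v i ^ 2)

/-- bounds `‖p_r‖ ≤ ‖r‖`, `‖q_r‖ ≤ ‖r‖`, `‖Δx ⊙ Δs‖ ≤ ‖r‖²/2`, and
`‖p_r‖ + ‖q_r‖ ≤ √2‖r‖` for the approximated Newton step. -/
theorem approx_newton_pq_bounds (n : ℕ) (hn : 0 < n)
    (Ht : Matrix (Fin n) (Fin n) ℝ) (hHt : Ht.PosSemidef)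
    (lam : ℝ) (hlam : 0 ≤ lam)
    (Ω : Matrix (Fin n) (Fin n ⊕ Fin n) ℝ)
    (hΩ : Ω = Matrix.fromCols (1 : Matrix (Fin n) (Fin n) ℝ) (-1))
    (τ : ℝ) (hτ : 0 < τ)
    (x s xt st : Fin n ⊕ Fin n → ℝ)
    (hx : ∀ i, 0 < x i) (hs : ∀ i, 0 < s i)
    (hxt : ∀ i, 0 < xt i) (hst : ∀ i, 0 < st i)
    (Δz : Fin n → ℝ) (Δx Δs : Fin n ⊕ Fin n → ℝ)
    (heq1 : (2 * lam) • Ht.mulVec Δz + Ω.mulVec Δx = 0)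
    (heq2 : Ωᵀ.mulVec Δz + Δs = 0)
    (heq3 : (fun i => st i * Δx i + xt i * Δs i) = fun i => τ - x i * s i)
    (r pr qr : Fin n ⊕ Fin n → ℝ)
    (hr : r = fun i => (Real.sqrt (xt i * st i))⁻¹ * (τ - x i * s i))
    (hpr : pr = fun i => Real.sqrt (st i / xt i) * Δx i)
    (hqr : qr = fun i => Real.sqrt (xt i / st i) * Δs i) :
    enorm2 pr ≤ enorm2 r ∧ enorm2 qr ≤ enorm2 r ∧
    enorm2 (fun i => Δx i * Δs i) ≤ (enorm2 r) ^ 2 / 2 ∧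
    enorm2 pr + enorm2 qr ≤ Real.sqrt 2 * enorm2 r := by
  -- basic sqrt identities
  have hsq0 : ∀ i, (0:ℝ) < Real.sqrt (xt i * st i) := fun i =>
    Real.sqrt_pos.mpr (mul_pos (hxt i) (hst i))
  have e1 : ∀ i, Real.sqrt (st i / xt i) * Real.sqrt (xt i * st i) = st i := by
    intro i
    have hxne := (hxt i).ne'
    rw [← Real.sqrt_mul (div_nonneg (hst i).le (hxt i).le)]
    rw [show st i / xt i * (xt i * st i) = st i ^ 2 by
      field_simp]
    exact Real.sqrt_sq (hst i).le
  have e2 : ∀ i, Real.sqrt (xt i / st i) * Real.sqrt (xt i * st i) = xt i := by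
    intro i
    have hsne := (hst i).ne'
    rw [← Real.sqrt_mul (div_nonneg (hxt i).le (hst i).le)]
    rw [show xt i / st i * (xt i * st i) = xt i ^ 2 by
      field_simp]
    exact Real.sqrt_sq (hxt i).le
  -- pointwise: pr + qr = r
  have hsum : ∀ i, pr i + qr i = r i := by
    intro i
    have h3 := congrFun heq3 i
    rw [hpr, hqr, hr]
    simp only
    rw [← h3]
    have hne := (hsq0 i).ne'
    rw [eq_inv_mul_iff_mul_eq₀ hne]
    linear_combination Δx i * e1 i + Δs i * e2 i
  -- pointwise: pr * qr = Δx * Δs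
  have hprod : ∀ i, pr i * qr i = Δx i * Δs i := by
    intro i
    rw [hpr, hqr]
    simp only
    have hxne := (hxt i).ne'
    have hsne := (hst i).ne'
    have h1 : Real.sqrt (st i / xt i) * Real.sqrt (xt i / st i) = 1 := by
      rw [← Real.sqrt_mul (div_nonneg (hst i).le (hxt i).le)]
      rw [show st i / xt i * (xt i / st i) = 1 by
        rw [div_mul_div_comm, mul_comm (st i) (xt i),
          div_self (by exact mul_ne_zero hxne hsne)]]
      exact Real.sqrt_one
    linear_combination (Δx i * Δs i) * h1
  -- the cross term is nonnegative
  have hΔs : Δs = -(Ωᵀ.mulVec Δz) := by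
    have := neg_eq_of_add_eq_zero_right heq2
    rw [← this]
  have hΩx : Ω.mulVec Δx = -((2 * lam) • Ht.mulVec Δz) := by
    have h := neg_eq_of_add_eq_zero_left heq1
    rw [← h, neg_neg]
  have hC : 0 ≤ ∑ i, Δx i * Δs i := by
    have hdot : ∑ i, Δx i * Δs i = Δx ⬝ᵥ Δs := rfl
    rw [hdot, hΔs, dotProduct_neg, Matrix.dotProduct_mulVec, Matrix.vecMul_transpose, hΩx]
    rw [neg_dotProduct, neg_neg, smul_dotProduct]
    have hpsd : 0 ≤ Δz ⬝ᵥ Ht.mulVec Δz := by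
      have := hHt.dotProduct_mulVec_nonneg Δz
      simpa using this
    have : Ht.mulVec Δz ⬝ᵥ Δz = Δz ⬝ᵥ Ht.mulVec Δz := dotProduct_comm _ _
    rw [smul_eq_mul, this]
    positivity
  set A := ∑ i, pr i ^ 2 with hAdef
  set B := ∑ i, qr i ^ 2 with hBdef
  set C := ∑ i, pr i * qr i with hCdef
  set R := ∑ i, r i ^ 2 with hRdef
  have hA : 0 ≤ A := Finset.sum_nonneg fun i _ => sq_nonneg _
  have hB : 0 ≤ B := Finset.sum_nonneg fun i _ => sq_nonneg _
  have hC' : 0 ≤ C := by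
    rw [hCdef]
    rw [show (∑ i, pr i * qr i) = ∑ i, Δx i * Δs i from
      Finset.sum_congr rfl fun i _ => hprod i]
    exact hC
  have hR : R = A + B + 2 * C := by
    rw [hRdef, hAdef, hBdef, hCdef]
    rw [← Finset.sum_add_distrib, Finset.mul_sum, ← Finset.sum_add_distrib]
    refine Finset.sum_congr rfl fun i _ => ?_
    rw [← hsum i]; ring
  have hR0 : 0 ≤ R := Finset.sum_nonneg fun i _ => sq_nonneg _
  have henorm_pr : enorm2 pr = Real.sqrt A := rfl
  have henorm_qr : enorm2 qr = Real.sqrt B := rfl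
  have henorm_r : enorm2 r = Real.sqrt R := rfl
  have hr2 : (enorm2 r) ^ 2 = R := by
    rw [henorm_r, Real.sq_sqrt hR0]
  clear_value A B C R
  refine ⟨?_, ?_, ?_, ?_⟩
  · rw [henorm_pr, henorm_r]
    exact Real.sqrt_le_sqrt (by linarith)
  · rw [henorm_qr, henorm_r]
    exact Real.sqrt_le_sqrt (by linarith)
  · -- ‖Δx ⊙ Δs‖ ≤ ‖r‖²/2
    rw [hr2]
    have hT : (A + B) / 2 = ∑ i, (pr i ^ 2 + qr i ^ 2) / 2 := by
      rw [hAdef, hBdef, ← Finset.sum_add_distrib, Finset.sum_div]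
    have hTi : ∀ i, (pr i ^ 2 + qr i ^ 2) / 2 ≤ (A + B) / 2 := by
      intro i
      rw [hT]
      exact Finset.single_le_sum (f := fun j => (pr j ^ 2 + qr j ^ 2) / 2)
        (fun j _ => by positivity) (Finset.mem_univ i)
    have hkey : ∑ i, (Δx i * Δs i) ^ 2 ≤ ((A + B) / 2) ^ 2 := by
      calc ∑ i, (Δx i * Δs i) ^ 2
          = ∑ i, (pr i * qr i) ^ 2 :=
            Finset.sum_congr rfl fun i _ => by rw [hprod i]
        _ ≤ ∑ i, ((pr i ^ 2 + qr i ^ 2) / 2) * ((A + B) / 2) := by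
            refine Finset.sum_le_sum fun i _ => ?_
            nlinarith [hTi i, sq_nonneg (pr i ^ 2 - qr i ^ 2), sq_nonneg (pr i),
              sq_nonneg (qr i), sq_nonneg (pr i * qr i)]
        _ = ((A + B) / 2) ^ 2 := by
            rw [← Finset.sum_mul, ← hT]; ring
    have h2 : (0:ℝ) ≤ (A + B) / 2 := by linarith
    have hmain : enorm2 (fun i => Δx i * Δs i) ≤ (A + B) / 2 := by
      simp only [enorm2]
      calc Real.sqrt (∑ i, (Δx i * Δs i) ^ 2)
          ≤ Real.sqrt (((A + B) / 2) ^ 2) := Real.sqrt_le_sqrt hkey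
        _ = (A + B) / 2 := Real.sqrt_sq h2
    linarith
  · -- ‖pr‖ + ‖qr‖ ≤ √2 ‖r‖
    rw [henorm_pr, henorm_qr, henorm_r]
    have hA2 : Real.sqrt A ^ 2 = A := Real.sq_sqrt hA
    have hB2 : Real.sqrt B ^ 2 = B := Real.sq_sqrt hB
    have h4 : (Real.sqrt A + Real.sqrt B) ^ 2 ≤ 2 * R := by
      nlinarith [sq_nonneg (Real.sqrt A - Real.sqrt B)]
    calc Real.sqrt A + Real.sqrt B
        = Real.sqrt ((Real.sqrt A + Real.sqrt B) ^ 2) :=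
          (Real.sqrt_sq (by positivity)).symm
      _ ≤ Real.sqrt (2 * R) := Real.sqrt_le_sqrt h4
      _ = Real.sqrt 2 * Real.sqrt R := Real.sqrt_mul (by norm_num) R
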